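/- For complex numbers c, d and t ∈ (0,1), setting τ_t = min{t, 1-t}: (|c|+|d|)/2 - (1/(2τ_t))·((1-t)|c| + t|d| - |(1-t)c + td|) ≤ |(c+d)/2|. -/

import Mathlib

/-- For complex numbers `c, d` and `t ∈ (0,1)`, with `τ_t = min{t, 1-t}`:
`(|c|+|d|)/2 - (1/(2τ_t))((1-t)|c| + t|d| - |(1-t)c + t d|) ≤ |(c+d)/2|`. -/
theorem reverse_triangle_inequality (c d : ℂ) (t : ℝ) (ht : t ∈ Set.Ioo (0:ℝ) 1) :
    (‖c‖ + ‖d‖) / 2 -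
        (1 / (2 * min t (1 - t))) *
          ((1 - t) * ‖c‖ + t * ‖d‖ -
            ‖((1 - t : ℝ) : ℂ) * c + (t : ℂ) * d‖) ≤
      ‖(c + d) / 2‖ := by
  obtain ⟨ht0, ht1⟩ := ht
  have hτ : (0:ℝ) < min t (1 - t) := lt_min ht0 (by linarith)
  have habs : ‖(c + d) / 2‖ = ‖c + d‖ / 2 := by
    rw [norm_div]; norm_num
  have key : min t (1 - t) * (‖c‖ + ‖d‖ - ‖c + d‖) ≤
      (1 - t) * ‖c‖ + t * ‖d‖ -
        ‖((1 - t : ℝ) : ℂ) * c + (t : ℂ) * d‖ := by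
    rcases le_total t (1 - t) with h | h
    · rw [min_eq_left h]
      have hrw : ((1 - t : ℝ) : ℂ) * c + (t : ℂ) * d
          = ((1 - 2*t : ℝ) : ℂ) * c + (t : ℝ) * (c + d) := by push_cast; ring
      have tri : ‖((1 - t : ℝ) : ℂ) * c + (t : ℂ) * d‖ ≤
          (1 - 2*t) * ‖c‖ + t * ‖c + d‖ := by
        rw [hrw]
        calc ‖((1 - 2*t : ℝ) : ℂ) * c + ((t : ℝ) : ℂ) * (c + d)‖
            ≤ ‖((1 - 2*t : ℝ) : ℂ) * c‖ + ‖((t : ℝ) : ℂ) * (c + d)‖ :=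
              norm_add_le _ _
          _ = (1 - 2*t) * ‖c‖ + t * ‖c + d‖ := by
              rw [norm_mul, norm_mul, Complex.norm_real, Complex.norm_real, Real.norm_eq_abs, Real.norm_eq_abs,
                abs_of_nonneg (by linarith), abs_of_nonneg (by linarith)]
      linarith
    · rw [min_eq_right h]
      have hrw : ((1 - t : ℝ) : ℂ) * c + (t : ℂ) * d
          = ((2*t - 1 : ℝ) : ℂ) * d + ((1 - t : ℝ) : ℂ) * (c + d) := by push_cast; ring
      have tri : ‖((1 - t : ℝ) : ℂ) * c + (t : ℂ) * d‖ ≤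
          (2*t - 1) * ‖d‖ + (1 - t) * ‖c + d‖ := by
        rw [hrw]
        calc ‖((2*t - 1 : ℝ) : ℂ) * d + ((1 - t : ℝ) : ℂ) * (c + d)‖
            ≤ ‖((2*t - 1 : ℝ) : ℂ) * d‖ + ‖((1 - t : ℝ) : ℂ) * (c + d)‖ :=
              norm_add_le _ _
          _ = (2*t - 1) * ‖d‖ + (1 - t) * ‖c + d‖ := by
              rw [norm_mul, norm_mul, Complex.norm_real, Complex.norm_real, Real.norm_eq_abs, Real.norm_eq_abs,
                abs_of_nonneg (by linarith), abs_of_nonneg (by linarith)]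
      linarith
  have hmul := mul_le_mul_of_nonneg_left key (le_of_lt (by positivity :
    (0:ℝ) < 1 / (2 * min t (1 - t))))
  have hsimp : (1 / (2 * min t (1 - t))) *
      (min t (1 - t) * (‖c‖ + ‖d‖ - ‖c + d‖))
      = (‖c‖ + ‖d‖ - ‖c + d‖) / 2 := by
    field_simp
  rw [hsimp] at hmul
  rw [habs]
  linarith
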